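/- arXiv:1002.0758 — 11 statements merged into one kernel-verified Lean document; each statement's English description precedes it below -/
import Mathlib

section
/- Let A be an n×n matrix over the max-plus semiring whose Kleene star A* stabilizes (equals I ⊕ A ⊕ ... ⊕ A^{n-1}). Then the solution set {x : A ⊗ x ≤ x} is exactly the set of max-plus linear combinations of the columns of A*. -/
open Finset

/-- The max-plus semiring carrier: ℝ ∪ {-∞}. Addition of the semiring is `⊔` (max),
multiplication is `+` (with `⊥ + x = ⊥`), zero is `⊥`, unit is `0`. -/
abbrev MP := WithBot ℝ

/-- Max-plus matrix-vector product: `(A ⊗ x) i = max_j (A i j + x j)`. -/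
def mvMul {n : ℕ} (A : Matrix (Fin n) (Fin n) MP) (x : Fin n → MP) : Fin n → MP :=
  fun i => univ.sup fun j => A i j + x j

/-- Max-plus matrix-matrix product. -/
def mmMul {n : ℕ} (A B : Matrix (Fin n) (Fin n) MP) : Matrix (Fin n) (Fin n) MP :=
  fun i j => univ.sup fun k => A i k + B k j

/-- Max-plus identity matrix: `0` on the diagonal, `⊥ = -∞` elsewhere. -/
def mpI {n : ℕ} : Matrix (Fin n) (Fin n) MP := fun i j => if i = j then 0 else ⊥

/-- Max-plus matrix powers. -/
def mpPow {n : ℕ} (A : Matrix (Fin n) (Fin n) MP) : ℕ → Matrix (Fin n) (Fin n) MP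
  | 0 => mpI
  | m + 1 => mmMul A (mpPow A m)

/-- The `i`-th multiorder relation: `x ≤_i y` iff `x_i ≠ -∞`, `y_i ≠ -∞` and
`x_j - x_i ≤ y_j - y_i` for all `j` (stated multiplicatively to avoid subtraction). -/
def leI {n : ℕ} (i : Fin n) (x y : Fin n → MP) : Prop :=
  x i ≠ ⊥ ∧ y i ≠ ⊥ ∧ ∀ j, x j + y i ≤ y j + x i

/-- The max-plus cone generated by a finite set `S` of vectors: all max-plus linear
combinations `⊕_{z ∈ S} α_z ⊗ z`. -/
def genBy {n : ℕ} (S : Finset (Fin n → MP)) : Set (Fin n → MP) :=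
  {x | ∃ α : (Fin n → MP) → MP, ∀ j, x j = S.sup fun z => α z + z j}

/-- A finite set of vectors is (max-plus) independent if no element is a max-plus
combination of the others. -/
def mpIndep {n : ℕ} (S : Finset (Fin n → MP)) : Prop :=
  ∀ s ∈ S, s ∉ genBy (S.erase s)


lemma mp_add_sup {β : Type*} (s : Finset β) (f : β → MP) (a : MP) :
    a + s.sup f = s.sup (fun k => a + f k) := by
  apply Finset.comp_sup_eq_sup_comp (a + ·)
  · intro x y
    rcases le_total x y with h | h
    · simp [max_eq_right h, max_eq_right (add_le_add_right h a)]
    · simp [max_eq_left h, max_eq_left (add_le_add_right h a)]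
  · simp

/-- If the Kleene star of `A` stabilizes, then `{x : A ⊗ x ≤ x}` is exactly the set of
max-plus linear combinations of the columns of `A*`. -/
theorem maxplus_solution_set_generated_by_star_columns {n : ℕ}
    (A : Matrix (Fin n) (Fin n) MP) (Astar : Matrix (Fin n) (Fin n) MP)
    (hdef : ∀ i j, Astar i j = (Finset.range n).sup fun m => mpPow A m i j)
    (hstab : ∀ m i j, mpPow A m i j ≤ Astar i j) :
    {x : Fin n → MP | ∀ i, mvMul A x i ≤ x i}
      = {x : Fin n → MP | ∃ α : Fin n → MP, ∀ i, x i = univ.sup fun j => α j + Astar i j} := by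
  ext x
  simp only [Set.mem_setOf_eq]
  constructor
  · intro hx
    have hpow : ∀ m (i j : Fin n), mpPow A m i j + x j ≤ x i := by
      intro m
      induction m with
      | zero =>
        intro i j
        by_cases h : i = j
        · simp [mpPow, mpI, h]
        · simp [mpPow, mpI, h]
      | succ m ih =>
        intro i j
        have : mpPow A (m+1) i j + x j = x j + mpPow A (m+1) i j := add_comm _ _
        rw [this]
        show x j + (mmMul A (mpPow A m)) i j ≤ x i
        rw [mmMul, mp_add_sup]
        apply Finset.sup_le
        intro k _
        calc x j + (A i k + mpPow A m k j) = A i k + (mpPow A m k j + x j) :=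
              (add_comm _ _).trans (add_assoc _ _ _)
          _ ≤ A i k + x k := add_le_add_right (ih k j) _
          _ ≤ mvMul A x i := Finset.le_sup (f := fun j => A i j + x j) (Finset.mem_univ k)
          _ ≤ x i := hx i
    refine ⟨x, fun i => le_antisymm ?_ ?_⟩
    · have h0 : (0:MP) ≤ Astar i i := by
        rw [hdef]
        have : mpPow A 0 i i = 0 := by simp [mpPow, mpI]
        rw [← this]
        exact Finset.le_sup (f := fun m => mpPow A m i i) (Finset.mem_range.mpr i.pos)
      calc x i = x i + 0 := by rw [add_zero]
        _ ≤ x i + Astar i i := add_le_add_right h0 _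
        _ ≤ _ := Finset.le_sup (f := fun j => x j + Astar i j) (Finset.mem_univ i)
    · apply Finset.sup_le
      intro j _
      rw [hdef, mp_add_sup]
      apply Finset.sup_le
      intro m _
      calc x j + mpPow A m i j = mpPow A m i j + x j := add_comm _ _
        _ ≤ x i := hpow m i j
  · rintro ⟨α, hα⟩ i
    apply Finset.sup_le
    intro j _
    rw [hα j, mp_add_sup]
    apply Finset.sup_le
    intro k _
    have key : A i j + Astar j k ≤ Astar i k := by
      rw [hdef j k, mp_add_sup]
      apply Finset.sup_le
      intro m _
      calc A i j + mpPow A m j k ≤ mpPow A (m+1) i k :=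
            Finset.le_sup (f := fun l => A i l + mpPow A m l k) (Finset.mem_univ j)
        _ ≤ Astar i k := hstab (m+1) i k
    calc A i j + (α k + Astar j k) = α k + (A i j + Astar j k) := add_left_comm _ _ _
      _ ≤ α k + Astar i k := add_le_add_right key _
      _ ≤ univ.sup (fun j => α j + Astar i j) := Finset.le_sup (f := fun j => α j + Astar i j) (Finset.mem_univ k)
      _ = x i := (hα i).symm
end

section
/- Let A be an n×n max-plus matrix equal to the identity except in two rows k ≠ m, where row k is e'_k ⊕ ⊕_{l∈L₁} a_{kl}⊗e'_l and row m is e'_m ⊕ ⊕_{l∈L₂} a_{ml}⊗e'_l, with L₁ = {l ≠ k : a_{kl} ≠ -∞}, L₂ = {l ≠ m : a_{ml} ≠ -∞}. If a_{km} + a_{mk} > 0, then the solution set {x : A ⊗ x ≤ x} consists exactly of the vectors x with x_i = -∞ for all i ∈ L₁ ∪ L₂ ∪ {k, m}. -/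
open Finset

/-- If `A` equals the identity except in rows `k ≠ m` (with diagonal entries `0` there), and the
two-cycle `k → m → k` has positive weight (`A k m + A m k > 0`), then the solutions of
`A ⊗ x ≤ x` are exactly the vectors vanishing (`= -∞`) on `L₁ ∪ L₂ ∪ {k, m}`, where
`L₁ = {l ≠ k : A k l ≠ -∞}` and `L₂ = {l ≠ m : A m l ≠ -∞}`. -/
theorem maxplus_two_modified_rows_positive_cycle {n : ℕ}
    (A : Matrix (Fin n) (Fin n) MP) (k m : Fin n) (hkm : k ≠ m)
    (hkk : A k k = 0) (hmm : A m m = 0)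
    (hrow : ∀ i, i ≠ k → i ≠ m → ∀ j, A i j = mpI i j)
    (hcyc : 0 < A k m + A m k) :
    {x : Fin n → MP | ∀ i, mvMul A x i ≤ x i}
      = {x : Fin n → MP |
          ∀ i, ((i ≠ k ∧ A k i ≠ ⊥) ∨ (i ≠ m ∧ A m i ≠ ⊥) ∨ i = k ∨ i = m) → x i = ⊥} := by
  ext x
  simp only [Set.mem_setOf_eq]
  have hakm : A k m ≠ ⊥ := by
    intro h; rw [h, WithBot.bot_add] at hcyc; exact absurd hcyc (by simp)
  have hamk : A m k ≠ ⊥ := by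
    intro h; rw [h, WithBot.add_bot] at hcyc; exact absurd hcyc (by simp)
  constructor
  · intro h
    have h1 : A k m + x m ≤ x k :=
      le_trans (Finset.le_sup (f := fun j => A k j + x j) (mem_univ m)) (h k)
    have h2 : A m k + x k ≤ x m :=
      le_trans (Finset.le_sup (f := fun j => A m j + x j) (mem_univ k)) (h m)
    have hor : x k = ⊥ ∨ x m = ⊥ := by
      by_contra hc
      push_neg at hc
      obtain ⟨a, ha⟩ := WithBot.ne_bot_iff_exists.mp hakm
      obtain ⟨b, hb⟩ := WithBot.ne_bot_iff_exists.mp hamk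
      obtain ⟨u, hu⟩ := WithBot.ne_bot_iff_exists.mp hc.1
      obtain ⟨v, hv⟩ := WithBot.ne_bot_iff_exists.mp hc.2
      rw [← ha, ← hu, ← hv, ← WithBot.coe_add, WithBot.coe_le_coe] at h1
      rw [← hb, ← hu, ← hv, ← WithBot.coe_add, WithBot.coe_le_coe] at h2
      rw [← ha, ← hb, ← WithBot.coe_add] at hcyc
      have hcyc' : (0:ℝ) < a + b := by exact_mod_cast hcyc
      linarith
    have hxk : x k = ⊥ := by
      rcases hor with h' | h'
      · exact h'
      · rw [h', le_bot_iff, WithBot.add_eq_bot] at h2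
        tauto
    have hxm : x m = ⊥ := by
      rw [hxk, le_bot_iff, WithBot.add_eq_bot] at h1
      tauto
    intro i hi
    rcases hi with ⟨hik, hAk⟩ | ⟨him, hAm⟩ | rfl | rfl
    · have : A k i + x i ≤ x k :=
        le_trans (Finset.le_sup (f := fun j => A k j + x j) (mem_univ i)) (h k)
      rw [hxk, le_bot_iff, WithBot.add_eq_bot] at this
      tauto
    · have : A m i + x i ≤ x m :=
        le_trans (Finset.le_sup (f := fun j => A m j + x j) (mem_univ i)) (h m)
      rw [hxm, le_bot_iff, WithBot.add_eq_bot] at this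
      tauto
    · exact hxk
    · exact hxm
  · intro h i
    have hxk : x k = ⊥ := h k (Or.inr (Or.inr (Or.inl rfl)))
    have hxm : x m = ⊥ := h m (Or.inr (Or.inr (Or.inr rfl)))
    apply Finset.sup_le
    intro j _
    by_cases hik : i = k
    · rw [hik, hxk]
      by_cases hjk : j = k
      · rw [hjk, hxk, WithBot.add_bot]
      · by_cases hA : A k j = ⊥
        · rw [hA, WithBot.bot_add]
        · rw [h j (Or.inl ⟨hjk, hA⟩), WithBot.add_bot]
    · by_cases him : i = m
      · rw [him, hxm]
        by_cases hjm : j = m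
        · rw [hjm, hxm, WithBot.add_bot]
        · by_cases hA : A m j = ⊥
          · rw [hA, WithBot.bot_add]
          · rw [h j (Or.inr (Or.inl ⟨hjm, hA⟩)), WithBot.add_bot]
      · rw [hrow i hik him j, mpI]
        by_cases hij : i = j
        · subst hij; simp
        · simp [hij]
end

section
/- With notation as in the previous statement (A equals identity except in rows k ≠ m), if x is a vector with x_i ≠ -∞ for some i ∈ L₁ ∪ L₂ ∪ {k,m} and a_{km} + a_{mk} > 0, then A ⊗ x ≤ x is impossible; in particular any solution x of A ⊗ x ≤ x with some x_i ≠ -∞, i ∈ L₁ ∪ L₂ ∪ {k,m}, must satisfy both x_k ≠ -∞ and x_m ≠ -∞, leading to the contradiction x_k ≥ a_{km} + a_{mk} + x_k > x_k. -/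
open Finset

/-- With `A` equal to the identity except in rows `k ≠ m` and the two-cycle `k → m → k` of
positive weight, a vector `x` which is non-`-∞` at some index of `L₁ ∪ L₂ ∪ {k, m}` cannot
satisfy `A ⊗ x ≤ x`. -/
theorem maxplus_two_modified_rows_positive_cycle_no_solution {n : ℕ}
    (A : Matrix (Fin n) (Fin n) MP) (k m : Fin n) (hkm : k ≠ m)
    (hkk : A k k = 0) (hmm : A m m = 0)
    (hrow : ∀ i, i ≠ k → i ≠ m → ∀ j, A i j = mpI i j)
    (hcyc : 0 < A k m + A m k)
    (x : Fin n → MP)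
    (hx : ∃ i, ((i ≠ k ∧ A k i ≠ ⊥) ∨ (i ≠ m ∧ A m i ≠ ⊥) ∨ i = k ∨ i = m) ∧ x i ≠ ⊥) :
    ¬ (∀ i, mvMul A x i ≤ x i) := by
  intro h
  obtain ⟨i, hi, hxi⟩ := hx
  have hAkm : A k m ≠ ⊥ := by
    intro hb; rw [hb, WithBot.bot_add] at hcyc; exact absurd hcyc (by simp)
  have hAmk : A m k ≠ ⊥ := by
    intro hb; rw [hb, WithBot.add_bot] at hcyc; exact absurd hcyc (by simp)
  have hk' : ∀ j, A k j + x j ≤ x k := fun j =>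
    le_trans (Finset.le_sup (f := fun j => A k j + x j) (Finset.mem_univ j)) (h k)
  have hm' : ∀ j, A m j + x j ≤ x m := fun j =>
    le_trans (Finset.le_sup (f := fun j => A m j + x j) (Finset.mem_univ j)) (h m)
  have hxk : x k ≠ ⊥ := by
    rcases hi with ⟨_, hAi⟩ | ⟨_, hAi⟩ | rfl | heq
    · intro hb
      have := hk' i
      rw [hb, le_bot_iff, WithBot.add_eq_bot] at this
      tauto
    · have hxm : x m ≠ ⊥ := by
        intro hb
        have := hm' i
        rw [hb, le_bot_iff, WithBot.add_eq_bot] at this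
        tauto
      intro hb
      have := hk' m
      rw [hb, le_bot_iff, WithBot.add_eq_bot] at this
      tauto
    · exact hxi
    · have hxm : x m ≠ ⊥ := heq ▸ hxi
      intro hb
      have := hk' m
      rw [hb, le_bot_iff, WithBot.add_eq_bot] at this
      tauto
  have hxm : x m ≠ ⊥ := by
    intro hb
    have := hm' k
    rw [hb, le_bot_iff, WithBot.add_eq_bot] at this
    tauto
  have h1 : A k m + (A m k + x k) ≤ x k :=
    le_trans (add_le_add le_rfl (hm' k)) (hk' m)
  have h2 : 0 + x k < (A k m + A m k) + x k := by
    exact WithBot.add_lt_add_right hxk hcyc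
  rw [zero_add, add_assoc] at h2
  exact absurd (lt_of_lt_of_le h2 h1) (lt_irrefl _)
end

section
/- Each set S^{kl} = {x : ⊕_{i∈I₁} a_{1i}⊗x_i ≤ b_{1k}⊗x_k, ⊕_{i∈I₂} a_{2i}⊗x_i ≤ b_{2l}⊗x_l} (with b_{1k}, b_{2l} finite, k ∉ I₁, l ∉ I₂) can be written in the form S^{kl} = {x : A^{kl} ⊗ x ≤ x} for an explicit n×n max-plus matrix A^{kl} that equals the identity except possibly in rows k and l; namely, when k ≠ l, row k of A^{kl} is e'_k ⊕ ⊕_{i∈I₁} (a_{1i} - b_{1k})⊗e'_i and row l is e'_l ⊕ ⊕_{i∈I₂} (a_{2i} - b_{2l})⊗e'_i. -/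
open Finset

private lemma mp_add_cancel (r : ℝ) (x y : MP) :
    x + (r : MP) ≤ y + (r : MP) ↔ x ≤ y := by
  constructor
  · intro h
    have h2 := add_le_add_left h ((-r : ℝ) : MP)
    simpa [add_assoc, ← WithBot.coe_add] using h2
  · intro h; exact add_le_add_left h _

/-- For `k ≠ l` with `b_{1k}, b_{2l}` finite, `k ∉ I₁`, `l ∉ I₂`, the set `S^{kl}` equals
`{x : A^{kl} ⊗ x ≤ x}`, where `A^{kl}` is the identity except that row `k` is
`e'_k ⊕ ⊕_{i∈I₁} (a_{1i} - b_{1k}) ⊗ e'_i` and row `l` is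
`e'_l ⊕ ⊕_{i∈I₂} (a_{2i} - b_{2l}) ⊗ e'_i`. -/
theorem maxplus_Skl_as_star_system {n : ℕ} (a1 a2 : Fin n → MP)
    (I1 I2 : Finset (Fin n)) (k l : Fin n) (hkl : k ≠ l)
    (b1k b2l : ℝ) (hk : k ∉ I1) (hl : l ∉ I2)
    (A : Matrix (Fin n) (Fin n) MP)
    (hAk : ∀ j, A k j = if j = k then 0 else if j ∈ I1 then a1 j + ((-b1k : ℝ) : MP) else ⊥)
    (hAl : ∀ j, A l j = if j = l then 0 else if j ∈ I2 then a2 j + ((-b2l : ℝ) : MP) else ⊥)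
    (hA : ∀ i, i ≠ k → i ≠ l → ∀ j, A i j = mpI i j) :
    {x : Fin n → MP |
        (I1.sup fun i => a1 i + x i) ≤ ((b1k : ℝ) : MP) + x k ∧
        (I2.sup fun i => a2 i + x i) ≤ ((b2l : ℝ) : MP) + x l}
      = {x : Fin n → MP | ∀ i, mvMul A x i ≤ x i} := by
  ext x
  simp only [Set.mem_setOf_eq]
  have conv1 : ∀ (r : ℝ) (u v w : MP), (u + ((-r : ℝ) : MP) + v ≤ w ↔ u + v ≤ (r : MP) + w) := by
    intro r u v w
    rw [← mp_add_cancel r (u + ((-r:ℝ):MP) + v) w]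
    have : u + ((-r:ℝ):MP) + v + (r:MP) = u + v := by
      have h0 : ((-r:ℝ):MP) + (r:MP) = 0 := by
        rw [← WithBot.coe_add]; norm_num
      calc u + ((-r:ℝ):MP) + v + (r:MP) = u + v + (((-r:ℝ):MP) + (r:MP)) := by
            abel
        _ = u + v := by rw [h0, add_zero]
    rw [this, add_comm w (r:MP)]
  constructor
  · rintro ⟨h1, h2⟩ i
    by_cases hik : i = k
    · subst hik
      apply Finset.sup_le
      intro j _
      rw [hAk j]
      split_ifs with hj hj1
      · subst hj; simp
      · rw [conv1]
        exact le_trans (Finset.le_sup (f := fun i => a1 i + x i) hj1) h1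
      · simp
    · by_cases hil : i = l
      · subst hil
        apply Finset.sup_le
        intro j _
        rw [hAl j]
        split_ifs with hj hj2
        · subst hj; simp
        · rw [conv1]
          exact le_trans (Finset.le_sup (f := fun i => a2 i + x i) hj2) h2
        · simp
      · apply Finset.sup_le
        intro j _
        rw [hA i hik hil j, mpI]
        by_cases hij : i = j
        · subst hij; simp
        · simp [hij]
  · intro h
    constructor
    · apply Finset.sup_le
      intro j hj
      have hjk : j ≠ k := fun e => hk (e ▸ hj)
      have := le_trans (Finset.le_sup (f := fun j => A k j + x j) (Finset.mem_univ j)) (h k)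
      simp only [hAk j, if_neg hjk, if_pos hj] at this
      rw [← conv1 b1k]
      exact this
    · apply Finset.sup_le
      intro j hj
      have hjl : j ≠ l := fun e => hl (e ▸ hj)
      have := le_trans (Finset.le_sup (f := fun j => A l j + x j) (Finset.mem_univ j)) (h l)
      simp only [hAl j, if_neg hjl, if_pos hj] at this
      rw [← conv1 b2l]
      exact this
end

section
/- Let A be an n×n max-plus matrix equal to the identity except in rows k ≠ l, with A_{kl} = α and A_{lk} = β the only possibly-finite off-diagonal entries in columns l and k respectively of those rows, together with other off-diagonal entries in rows k and l. If α + β ≤ 0 (including the case where α or β is -∞), then the Kleene star A* is given by A* = I ⊕ A ⊕ A², and A ⊗ A* = A* ⊗ A ≤ A*. -/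
open Finset

section MaxPlusAux

lemma mp_add_sup_s9 (a b c : MP) : a + (b ⊔ c) = (a + b) ⊔ (a + c) := by
  rcases le_total b c with h | h
  · rw [sup_eq_right.2 h, sup_eq_right.2 (add_le_add_right h a)]
  · rw [sup_eq_left.2 h, sup_eq_left.2 (add_le_add_right h a)]

lemma mp_sup_add (a b c : MP) : (b ⊔ c) + a = (b + a) ⊔ (c + a) := by
  rw [add_comm, mp_add_sup_s9, add_comm b, add_comm c]

lemma mp_add_finsup {ι : Type*} (s : Finset ι) (a : MP) (f : ι → MP) :
    a + s.sup f = s.sup fun x => a + f x := by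
  induction s using Finset.cons_induction with
  | empty => simp [WithBot.add_bot]
  | cons x s hx ih => rw [Finset.sup_cons, Finset.sup_cons, mp_add_sup_s9, ih]

lemma mp_finsup_add {ι : Type*} (s : Finset ι) (a : MP) (f : ι → MP) :
    s.sup f + a = s.sup fun x => f x + a := by
  rw [add_comm, mp_add_finsup]; simp [add_comm]

lemma le_mmMul {n : ℕ} (A B : Matrix (Fin n) (Fin n) MP) (i j p : Fin n) :
    A i p + B p j ≤ mmMul A B i j := by
  exact Finset.le_sup (f := fun q => A i q + B q j) (Finset.mem_univ p)

lemma mmMul_le {n : ℕ} {A B : Matrix (Fin n) (Fin n) MP} {i j : Fin n} {c : MP}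
    (h : ∀ p, A i p + B p j ≤ c) : mmMul A B i j ≤ c :=
  Finset.sup_le fun p _ => h p

lemma mmMul_mono_right {n : ℕ} (A : Matrix (Fin n) (Fin n) MP)
    {B C : Matrix (Fin n) (Fin n) MP} (h : ∀ i j, B i j ≤ C i j) (i j : Fin n) :
    mmMul A B i j ≤ mmMul A C i j :=
  mmMul_le fun p => le_trans (add_le_add_right (h p j) _) (le_mmMul A C i j p)

lemma mmMul_mono_left {n : ℕ} (A : Matrix (Fin n) (Fin n) MP)
    {B C : Matrix (Fin n) (Fin n) MP} (h : ∀ i j, B i j ≤ C i j) (i j : Fin n) :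
    mmMul B A i j ≤ mmMul C A i j :=
  mmMul_le fun p => le_trans (add_le_add_left (h i p) _) (le_mmMul C A i j p)

lemma mmMul_I_right {n : ℕ} (A : Matrix (Fin n) (Fin n) MP) : mmMul A mpI = A := by
  funext i j
  apply le_antisymm
  · apply mmMul_le; intro p
    by_cases hp : p = j
    · subst hp; rw [show mpI p p = (0:MP) from if_pos rfl, add_zero]
    · rw [show mpI p j = (⊥:MP) from if_neg hp, WithBot.add_bot]; exact bot_le
  · have h := le_mmMul A mpI i j j
    rwa [show mpI j j = (0:MP) from if_pos rfl, add_zero] at h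

lemma mmMul_I_left {n : ℕ} (A : Matrix (Fin n) (Fin n) MP) : mmMul mpI A = A := by
  funext i j
  apply le_antisymm
  · apply mmMul_le; intro p
    by_cases hp : i = p
    · subst hp; rw [show mpI i i = (0:MP) from if_pos rfl, zero_add]
    · rw [show mpI i p = (⊥:MP) from if_neg hp, WithBot.bot_add]; exact bot_le
  · have h := le_mmMul mpI A i j i
    rwa [show mpI i i = (0:MP) from if_pos rfl, zero_add] at h

lemma mmMul_assoc {n : ℕ} (A B C : Matrix (Fin n) (Fin n) MP) :
    mmMul (mmMul A B) C = mmMul A (mmMul B C) := by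
  funext i j
  show (univ.sup fun q => (univ.sup fun p => A i p + B p q) + C q j)
      = univ.sup fun p => A i p + univ.sup fun q => B p q + C q j
  simp only [mp_finsup_add, mp_add_finsup]
  rw [Finset.sup_comm]
  simp only [add_assoc]

lemma key3r {n : ℕ} (A B C D : Matrix (Fin n) (Fin n) MP) (i j : Fin n) :
    mmMul A (fun i j => B i j ⊔ C i j ⊔ D i j) i j
      = mmMul A B i j ⊔ mmMul A C i j ⊔ mmMul A D i j := by
  apply le_antisymm
  · apply mmMul_le; intro p
    rw [mp_add_sup_s9, mp_add_sup_s9]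
    exact sup_le_sup (sup_le_sup (le_mmMul A B i j p) (le_mmMul A C i j p)) (le_mmMul A D i j p)
  · refine sup_le (sup_le ?_ ?_) ?_
    · exact mmMul_mono_right A (fun i j => le_sup_left.trans le_sup_left) i j
    · exact mmMul_mono_right A (fun i j => le_sup_right.trans le_sup_left) i j
    · exact mmMul_mono_right A (fun i j => le_sup_right) i j

lemma key3l {n : ℕ} (A B C D : Matrix (Fin n) (Fin n) MP) (i j : Fin n) :
    mmMul (fun i j => B i j ⊔ C i j ⊔ D i j) A i j
      = mmMul B A i j ⊔ mmMul C A i j ⊔ mmMul D A i j := by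
  apply le_antisymm
  · apply mmMul_le; intro p
    rw [mp_sup_add, mp_sup_add]
    exact sup_le_sup (sup_le_sup (le_mmMul B A i j p) (le_mmMul C A i j p)) (le_mmMul D A i j p)
  · refine sup_le (sup_le ?_ ?_) ?_
    · exact mmMul_mono_left A (fun i j => le_sup_left.trans le_sup_left) i j
    · exact mmMul_mono_left A (fun i j => le_sup_right.trans le_sup_left) i j
    · exact mmMul_mono_left A (fun i j => le_sup_right) i j

lemma cube_row {n : ℕ} (A : Matrix (Fin n) (Fin n) MP) (k l : Fin n)
    (hkk : A k k = 0) (hll : A l l = 0)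
    (hrow : ∀ i, i ≠ k → i ≠ l → ∀ j, A i j = mpI i j)
    (hcyc : A k l + A l k ≤ 0) (j p q : Fin n) :
    A k p + (A p q + A q j) ≤ mpI k j ⊔ A k j ⊔ mmMul A A k j := by
  have hA2 : ∀ m, A k m + A m j ≤ mpI k j ⊔ A k j ⊔ mmMul A A k j :=
    fun m => (le_mmMul A A k j m).trans le_sup_right
  by_cases hpk : p = k
  · rw [hpk, hkk, zero_add]; exact hA2 q
  by_cases hpl : p = l
  · rw [hpl]
    by_cases hql : q = l
    · rw [hql, hll, zero_add]; exact hA2 l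
    by_cases hqk : q = k
    · rw [hqk]
      calc A k l + (A l k + A k j) = (A k l + A l k) + A k j := (add_assoc _ _ _).symm
        _ ≤ 0 + A k j := add_le_add_left hcyc _
        _ = A k j := zero_add _
        _ ≤ _ := le_sup_right.trans le_sup_left
    by_cases hqj : q = j
    · rw [hrow q hqk hql j, show mpI q j = (0:MP) from if_pos hqj, add_zero, hqj]
      exact hA2 l
    · rw [hrow q hqk hql j, show mpI q j = (⊥:MP) from if_neg hqj,
        WithBot.add_bot, WithBot.add_bot]
      exact bot_le
  · by_cases hqp : q = p
    · rw [hqp, hrow p hpk hpl p, show mpI p p = (0:MP) from if_pos rfl, zero_add]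
      exact hA2 p
    · rw [hrow p hpk hpl q, show mpI p q = (⊥:MP) from if_neg (fun h => hqp h.symm),
        WithBot.bot_add, WithBot.add_bot]
      exact bot_le

lemma cube_le {n : ℕ} (A : Matrix (Fin n) (Fin n) MP) (k l : Fin n)
    (hkk : A k k = 0) (hll : A l l = 0)
    (hrow : ∀ i, i ≠ k → i ≠ l → ∀ j, A i j = mpI i j)
    (hcyc : A k l + A l k ≤ 0) (i j : Fin n) :
    mmMul A (mmMul A A) i j ≤ mpI i j ⊔ A i j ⊔ mmMul A A i j := by
  apply mmMul_le; intro p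
  rw [show mmMul A A p j = univ.sup fun q => A p q + A q j from rfl, mp_add_finsup]
  apply Finset.sup_le; intro q _
  by_cases hik : i = k
  · rw [hik]; exact cube_row A k l hkk hll hrow hcyc j p q
  by_cases hil : i = l
  · rw [hil]
    exact cube_row A l k hll hkk (fun i h1 h2 => hrow i h2 h1)
      (by rw [add_comm]; exact hcyc) j p q
  · by_cases hip : i = p
    · rw [← hip, hrow i hik hil i, show mpI i i = (0:MP) from if_pos rfl, zero_add]
      exact (le_mmMul A A i j q).trans le_sup_right
    · rw [hrow i hik hil p, show mpI i p = (⊥:MP) from if_neg hip, WithBot.bot_add]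
      exact bot_le

end MaxPlusAux

/-- If `A` equals the identity except in rows `k ≠ l` (with diagonal entries `0` there) and the
cycle weight `A k l + A l k` is non-positive, then the Kleene star stabilizes:
`A* = I ⊕ A ⊕ A²`, and `A ⊗ A* = A* ⊗ A ≤ A*`. -/
theorem maxplus_two_modified_rows_star_stabilizes {n : ℕ}
    (A : Matrix (Fin n) (Fin n) MP) (k l : Fin n) (hkl : k ≠ l)
    (hkk : A k k = 0) (hll : A l l = 0)
    (hrow : ∀ i, i ≠ k → i ≠ l → ∀ j, A i j = mpI i j)
    (hcyc : A k l + A l k ≤ 0) :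
    (∀ m i j, mpPow A m i j ≤ mpI i j ⊔ A i j ⊔ mmMul A A i j) ∧
    mmMul A (fun i j => mpI i j ⊔ A i j ⊔ mmMul A A i j)
      = mmMul (fun i j => mpI i j ⊔ A i j ⊔ mmMul A A i j) A ∧
    (∀ i j, mmMul A (fun i j => mpI i j ⊔ A i j ⊔ mmMul A A i j) i j
      ≤ mpI i j ⊔ A i j ⊔ mmMul A A i j) := by
  have hcube := cube_le A k l hkk hll hrow hcyc
  have habsorb : ∀ i j, mmMul A (fun i j => mpI i j ⊔ A i j ⊔ mmMul A A i j) i j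
      ≤ mpI i j ⊔ A i j ⊔ mmMul A A i j := by
    intro i j
    rw [key3r A mpI A (mmMul A A) i j, mmMul_I_right]
    refine sup_le (sup_le ?_ ?_) ?_
    · exact le_sup_right.trans le_sup_left
    · exact le_sup_right
    · exact hcube i j
  refine ⟨?_, ?_, habsorb⟩
  · intro m
    induction m with
    | zero => intro i j; exact le_sup_left.trans le_sup_left
    | succ m ih =>
      intro i j
      exact le_trans (mmMul_mono_right A ih i j) (habsorb i j)
  · funext i j
    rw [key3r A mpI A (mmMul A A) i j, key3l A mpI A (mmMul A A) i j,
      mmMul_I_right, mmMul_I_left, mmMul_assoc]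
end

section
/- Multiorder principle (necessity): Let K ⊆ (ℝ ∪ {-∞})ⁿ be a max-plus cone generated by a finite set S, and let y ∈ S with y ≠ the all -∞ vector. If for every i with y_i ≠ -∞ there exists z^i ∈ S with z^i ≠ y (up to scalar) such that z^i ≤_i y, then y = ⊕_{i ∈ supp(y)} (y_i - z^i_i) ⊗ z^i, i.e., y is a max-plus combination of the z^i. -/
open Finset

/-- Multiorder principle, necessity: if `y ∈ S` is non-zero and for every `i ∈ supp(y)` there is
`z^i ∈ S`, not proportional to `y`, with `z^i ≤_i y`, then
`y = ⊕_{i ∈ supp(y)} (y_i ⊗ (z^i_i)⁻¹) ⊗ z^i` is a max-plus combination of the `z^i`. -/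
theorem maxplus_multiorder_necessity {n : ℕ} (S : Finset (Fin n → MP))
    (y : Fin n → MP) (hy : y ∈ S) (hy0 : y ≠ fun _ => ⊥)
    (z : Fin n → (Fin n → MP))
    (hz : ∀ i, y i ≠ ⊥ →
      z i ∈ S ∧ leI i (z i) y ∧ ¬ ∃ c : ℝ, ∀ j, z i j = (c : MP) + y j) :
    ∃ α : Fin n → MP, (∀ i, y i ≠ ⊥ → α i + z i i = y i) ∧
      ∀ j, y j = univ.sup fun i => if y i = ⊥ then ⊥ else α i + z i j := by
  have key : ∀ (a b : ℝ) (x w : MP), x + (a : MP) ≤ w + (b : MP) →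
      ((a - b : ℝ) : MP) + x ≤ w := by
    intro a b x w h
    induction x using WithBot.recBotCoe with
    | bot => simp
    | coe r =>
      induction w using WithBot.recBotCoe with
      | bot =>
        rw [← WithBot.coe_add, WithBot.bot_add] at h
        exact absurd h (by simp)
      | coe s =>
        rw [← WithBot.coe_add, ← WithBot.coe_add, WithBot.coe_le_coe] at h
        rw [← WithBot.coe_add, WithBot.coe_le_coe]
        linarith
  refine ⟨fun i => ((WithBot.unbotD 0 (y i) - WithBot.unbotD 0 (z i i) : ℝ) : MP), ?_, ?_⟩
  · intro i hi
    obtain ⟨a, ha⟩ := WithBot.ne_bot_iff_exists.1 hi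
    obtain ⟨b, hb⟩ := WithBot.ne_bot_iff_exists.1 (hz i hi).2.1.1
    simp only [← ha, ← hb, WithBot.unbotD_coe]
    rw [← WithBot.coe_add, WithBot.coe_inj]
    ring
  · intro j
    apply le_antisymm
    · by_cases hj : y j = ⊥
      · rw [hj]; exact bot_le
      · have := Finset.le_sup (f := fun i => if y i = ⊥ then ⊥
            else ((WithBot.unbotD 0 (y i) - WithBot.unbotD 0 (z i i) : ℝ) : MP) + z i j)
          (Finset.mem_univ j)
        simp only [if_neg hj] at this
        refine le_trans ?_ this
        obtain ⟨a, ha⟩ := WithBot.ne_bot_iff_exists.1 hj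
        obtain ⟨b, hb⟩ := WithBot.ne_bot_iff_exists.1 (hz j hj).2.1.1
        simp only [← ha, ← hb, WithBot.unbotD_coe, ← WithBot.coe_add,
          WithBot.coe_le_coe]
        linarith
    · apply Finset.sup_le
      intro i _
      by_cases hi : y i = ⊥
      · simp only [if_pos hi]; exact bot_le
      · simp only [if_neg hi]
        obtain ⟨a, ha⟩ := WithBot.ne_bot_iff_exists.1 hi
        obtain ⟨b, hb⟩ := WithBot.ne_bot_iff_exists.1 (hz i hi).2.1.1
        have hineq := (hz i hi).2.1.2.2 j
        rw [← ha, ← hb] at hineq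
        have := key a b (z i j) (y j) hineq
        simp only [← ha, ← hb, WithBot.unbotD_coe]
        exact this
end

section
/- Multiorder principle (sufficiency): Let K be a max-plus cone generated by a finite set S ⊆ (ℝ∪{-∞})ⁿ, and let y ∈ S. If y = ⊕_k α_k ⊗ z^k for vectors z^k ∈ S and scalars α_k, then for every i ∈ supp(y) there exists k(i) with y_i = α_{k(i)} + z^{k(i)}_i and α_{k(i)} + z^{k(i)}_j ≤ y_j for all j; consequently z^{k(i)} ≤_i y. Hence if y is i-minimal in S for some i (i.e., no z ∈ S with z not proportional to y satisfies z ≤_i y), then y cannot be written as a max-plus combination of elements of S not proportional to y. -/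
open Finset

/-- Auxiliary: the first part, stated for arbitrary representations. -/
lemma maxplus_aux {n m : ℕ} (y : Fin n → MP)
    (z : Fin m → (Fin n → MP)) (α : Fin m → MP)
    (hrep : ∀ j, y j = univ.sup fun k => α k + z k j)
    (i : Fin n) (hi : y i ≠ ⊥) :
    ∃ k, y i = α k + z k i ∧ (∀ j, α k + z k j ≤ y j) ∧ leI i (z k) y := by
  have hne : (univ : Finset (Fin m)).Nonempty := by
    by_contra h
    rw [not_nonempty_iff_eq_empty] at h
    exact hi (by rw [hrep i, h, Finset.sup_empty])
  obtain ⟨k, -, hk⟩ := Finset.exists_mem_eq_sup univ hne fun k => α k + z k i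
  have hki : y i = α k + z k i := by rw [hrep i]; exact hk
  have hle : ∀ j, α k + z k j ≤ y j := fun j => by
    rw [hrep j]; exact Finset.le_sup (f := fun k => α k + z k j) (mem_univ k)
  have hzk : z k i ≠ ⊥ := by
    intro h
    exact hi (by rw [hki, h, WithBot.add_bot])
  refine ⟨k, hki, hle, hzk, hi, fun j => ?_⟩
  calc z k j + y i = z k j + (α k + z k i) := by rw [hki]
    _ = (α k + z k j) + z k i := by rw [← add_assoc, add_comm (z k j) (α k)]
    _ ≤ y j + z k i := add_le_add_left (hle j) _

/-- Multiorder principle, sufficiency: if `y = ⊕_k α_k ⊗ z^k` with `z^k ∈ S`, then for every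
`i ∈ supp(y)` there is `k(i)` with `y_i = α_{k(i)} + z^{k(i)}_i`, `α_{k(i)} ⊗ z^{k(i)} ≤ y`,
and hence `z^{k(i)} ≤_i y`. Consequently, if `y` is `i`-minimal in `S` for some `i`, then `y`
is not a max-plus combination of elements of `S` that are not proportional to `y`. -/
theorem maxplus_multiorder_sufficiency {n m : ℕ} (S : Finset (Fin n → MP))
    (y : Fin n → MP) (hy : y ∈ S)
    (z : Fin m → (Fin n → MP)) (α : Fin m → MP)
    (hzS : ∀ k, z k ∈ S)
    (hrep : ∀ j, y j = univ.sup fun k => α k + z k j) :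
    (∀ i, y i ≠ ⊥ →
      ∃ k, y i = α k + z k i ∧ (∀ j, α k + z k j ≤ y j) ∧ leI i (z k) y) ∧
    ((∃ i, y i ≠ ⊥ ∧ ∀ w ∈ S, leI i w y → ∃ c : ℝ, ∀ j, w j = (c : MP) + y j) →
      ¬ ∃ (m' : ℕ) (z' : Fin m' → (Fin n → MP)) (α' : Fin m' → MP),
          (∀ k, z' k ∈ S ∧ ¬ ∃ c : ℝ, ∀ j, z' k j = (c : MP) + y j) ∧
          ∀ j, y j = univ.sup fun k => α' k + z' k j) := by
  constructor
  · exact fun i hi => maxplus_aux y z α hrep i hi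
  · rintro ⟨i, hi, hmin⟩ ⟨m', z', α', hk, hrep'⟩
    obtain ⟨k, -, -, hleI⟩ := maxplus_aux y z' α' hrep' i hi
    exact (hk k).2 (hmin (z' k) (hk k).1 hleI)
end

section
/- Any two bases of a finitely generated max-plus cone K ⊆ (ℝ∪{-∞})ⁿ coincide up to scaling: if S and T are both independent generating sets of K, then there is a bijection φ: S → T such that φ(s) is a scalar multiple (in max-plus sense, i.e., a constant translate) of s for each s ∈ S. -/
open Finset

lemma MP.add_max (c a b : MP) : c + (a ⊔ b) = (c + a) ⊔ (c + b) := by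
  rcases le_total a b with h | h
  · rw [sup_eq_right.mpr h, sup_eq_right.mpr (add_le_add (le_refl c) h)]
  · rw [sup_eq_left.mpr h, sup_eq_left.mpr (add_le_add (le_refl c) h)]

lemma MP.add_sup {ι : Type*} (s : Finset ι) (f : ι → MP) (c : MP) :
    c + s.sup f = s.sup fun i => c + f i := by
  classical
  induction s using Finset.induction with
  | empty => simp
  | insert _ _ h ih => rw [Finset.sup_insert, Finset.sup_insert, ← ih, MP.add_max]

lemma MP.sup_add {ι : Type*} (s : Finset ι) (f : ι → MP) (c : MP) :
    s.sup f + c = s.sup fun i => f i + c := by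
  rw [add_comm, MP.add_sup]; exact Finset.sup_congr rfl fun i _ => add_comm _ _

lemma MP.le_zero_of_add_le {γ x : MP} (h : γ + x ≤ x) (hx : x ≠ ⊥) : γ ≤ 0 := by
  induction x using WithBot.recBotCoe with
  | bot => exact absurd rfl hx
  | coe r =>
    induction γ using WithBot.recBotCoe with
    | bot => exact bot_le
    | coe g =>
      rw [← WithBot.coe_add, WithBot.coe_le_coe] at h
      exact_mod_cast (by linarith : g ≤ (0:ℝ))

lemma MP.add_lt_of_neg {γ x : MP} (h : γ < 0) (hx : x ≠ ⊥) : γ + x < x := by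
  induction x using WithBot.recBotCoe with
  | bot => exact absurd rfl hx
  | coe r =>
    induction γ using WithBot.recBotCoe with
    | bot => rw [WithBot.bot_add]; exact WithBot.bot_lt_coe r
    | coe g =>
      rw [← WithBot.coe_zero, WithBot.coe_lt_coe] at h
      rw [← WithBot.coe_add, WithBot.coe_lt_coe]; linarith

lemma mem_genBy_of_scale {n : ℕ} {S' : Finset (Fin n → MP)} {x y : Fin n → MP}
    (hx : x ∈ S') (c : MP) (hy : ∀ j, y j = c + x j) : y ∈ genBy S' := by
  classical
  refine ⟨fun z => if z = x then c else ⊥, fun j => ?_⟩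
  rw [hy j]
  apply le_antisymm
  · have := Finset.le_sup (f := fun z => (if z = x then c else ⊥) + z j) hx
    simpa using this
  · apply Finset.sup_le
    intro z hz
    by_cases h : z = x
    · subst h; simp
    · simp [h]

lemma mem_genBy_self {n : ℕ} {S' : Finset (Fin n → MP)} {x : Fin n → MP}
    (hx : x ∈ S') : x ∈ genBy S' :=
  mem_genBy_of_scale hx 0 fun j => (zero_add _).symm

lemma MP.shift_eq {c : ℝ} {x y : MP} (h : y = (c : MP) + x) : x = ((-c : ℝ) : MP) + y := by
  rw [h, ← add_assoc, ← WithBot.coe_add, neg_add_cancel, WithBot.coe_zero, zero_add]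

lemma extremal {n : ℕ} (S T : Finset (Fin n → MP)) (hS : mpIndep S)
    {s : Fin n → MP} (hs : s ∈ S) (hsT : s ∈ genBy T)
    (hTS : ∀ t ∈ T, t ∈ genBy S) :
    ∃ t ∈ T, ∃ c : ℝ, ∀ j, t j = (c : MP) + s j := by
  classical
  obtain ⟨α, hα⟩ := hsT
  set β : (Fin n → MP) → (Fin n → MP) → MP :=
    fun t => if h : t ∈ T then Classical.choose (hTS t h) else fun _ => ⊥ with hβdef
  have hβ : ∀ t ∈ T, ∀ j, t j = S.sup fun z => β t z + z j := by
    intro t ht j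
    simp only [hβdef, dif_pos ht]
    exact Classical.choose_spec (hTS t ht) j
  set γ : (Fin n → MP) → MP := fun z => T.sup fun t => α t + β t z with hγdef
  have key : ∀ j, s j = S.sup fun z => γ z + z j := by
    intro j
    rw [hα j]
    calc T.sup (fun t => α t + t j)
        = T.sup (fun t => S.sup fun z => α t + (β t z + z j)) := by
          refine Finset.sup_congr rfl fun t ht => ?_
          rw [hβ t ht j, MP.add_sup]
      _ = S.sup (fun z => T.sup fun t => α t + (β t z + z j)) := Finset.sup_comm _ _ _
      _ = S.sup (fun z => γ z + z j) := by
          refine Finset.sup_congr rfl fun z _ => ?_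
          show _ = (T.sup fun t => α t + β t z) + z j
          rw [MP.sup_add]
          exact Finset.sup_congr rfl fun t _ => (add_assoc _ _ _).symm
  obtain ⟨j0, hj0⟩ : ∃ j0, s j0 ≠ ⊥ := by
    by_contra hbot
    push_neg at hbot
    exact hS s hs ⟨fun _ => ⊥, fun j => by simp [hbot j]⟩
  have he : ∀ j, s j = (γ s + s j) ⊔ ((S.erase s).sup fun z => γ z + z j) := by
    intro j
    conv_lhs => rw [key j, ← Finset.insert_erase hs, Finset.sup_insert]
  have hle : γ s ≤ 0 := by
    have h1 : γ s + s j0 ≤ s j0 := by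
      conv_rhs => rw [he j0]
      exact le_sup_left
    exact MP.le_zero_of_add_le h1 hj0
  have hge : ¬ γ s < 0 := by
    intro hlt
    refine hS s hs ⟨γ, fun j => ?_⟩
    by_cases hbj : s j = ⊥
    · have h2 := he j
      rw [hbj, WithBot.add_bot, bot_sup_eq] at h2
      rw [hbj]
      exact h2
    · have hstrict : γ s + s j < s j := MP.add_lt_of_neg hlt hbj
      have hj := he j
      rcases le_total (γ s + s j) ((S.erase s).sup fun z => γ z + z j) with h | h
      · rw [sup_eq_right.mpr h] at hj; exact hj
      · rw [sup_eq_left.mpr h] at hj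
        exact absurd hj (ne_of_gt hstrict)
  have hγ0 : (T.sup fun t => α t + β t s) = 0 := le_antisymm hle (not_lt.mp hge)
  have hTne : T.Nonempty := by
    rcases T.eq_empty_or_nonempty with h | h
    · exfalso
      simp only [h, Finset.sup_empty] at hγ0
      exact absurd hγ0 (by simp)
    · exact h
  obtain ⟨t, ht, hteq⟩ := Finset.exists_mem_eq_sup T hTne fun t => α t + β t s
  have htv : α t + β t s = 0 := by rw [← hteq]; exact hγ0
  have hab : α t ≠ ⊥ ∧ β t s ≠ ⊥ := by
    constructor <;> intro hb <;> rw [hb] at htv <;> simp at htv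
  obtain ⟨a, ha⟩ := WithBot.ne_bot_iff_exists.mp hab.1
  obtain ⟨b, hb⟩ := WithBot.ne_bot_iff_exists.mp hab.2
  have hab0 : a + b = 0 := by
    rw [← ha, ← hb, ← WithBot.coe_add] at htv
    exact_mod_cast htv
  refine ⟨t, ht, b, fun j => ?_⟩
  apply le_antisymm
  · have h1 : α t + t j ≤ s j := by
      conv_rhs => rw [hα j]
      exact Finset.le_sup (f := fun z => α z + z j) ht
    have h2 : (b : MP) + (α t + t j) ≤ (b : MP) + s j := add_le_add (le_refl _) h1
    rw [← add_assoc, ← ha, ← WithBot.coe_add, (by linarith : b + a = 0),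
      WithBot.coe_zero, zero_add] at h2
    exact h2
  · have h1 : β t s + s j ≤ t j := by
      conv_rhs => rw [hβ t ht j]
      exact Finset.le_sup (f := fun z => β t z + z j) hs
    rw [hb]
    exact h1

lemma eq_of_scale {n : ℕ} {S' : Finset (Fin n → MP)} (hS' : mpIndep S')
    {x y : Fin n → MP} (hx : x ∈ S') (hy : y ∈ S') (c : ℝ)
    (h : ∀ j, x j = (c : MP) + y j) : x = y := by
  by_contra hne
  exact hS' x hx
    (mem_genBy_of_scale (Finset.mem_erase.mpr ⟨fun h' => hne h'.symm, hy⟩) c h)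


/-- Uniqueness of bases: any two independent generating sets of a finitely generated max-plus
cone are in bijection, matching elements up to a (real) scalar, i.e. a constant translate. -/
theorem maxplus_basis_unique_up_to_scaling {n : ℕ}
    (S T : Finset (Fin n → MP)) (K : Set (Fin n → MP))
    (hS : mpIndep S) (hT : mpIndep T) (hSK : genBy S = K) (hTK : genBy T = K) :
    ∃ φ : {s // s ∈ S} → {t // t ∈ T}, Function.Bijective φ ∧
      ∀ s : {s // s ∈ S}, ∃ c : ℝ, ∀ j, (φ s).1 j = (c : MP) + s.1 j := by
  classical
  have hSsub : ∀ s ∈ S, s ∈ genBy T := by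
    intro s hsm; rw [hTK, ← hSK]; exact mem_genBy_self hsm
  have hTsub : ∀ t ∈ T, t ∈ genBy S := by
    intro t htm; rw [hSK, ← hTK]; exact mem_genBy_self htm
  have F : ∀ s : {s // s ∈ S}, ∃ t, t ∈ T ∧ ∃ c : ℝ, ∀ j, t j = (c : MP) + s.1 j := by
    rintro ⟨s, hsm⟩
    obtain ⟨t, ht, c, hc⟩ := extremal S T hS hsm (hSsub s hsm) hTsub
    exact ⟨t, ht, c, hc⟩
  choose f hfT cf hcf using F
  have G : ∀ t : {t // t ∈ T}, ∃ s, s ∈ S ∧ ∃ c : ℝ, ∀ j, s j = (c : MP) + t.1 j := by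
    rintro ⟨t, htm⟩
    obtain ⟨s, hsm, c, hc⟩ := extremal T S hT htm (hTsub t htm) hSsub
    exact ⟨s, hsm, c, hc⟩
  choose g hgS cg hcg using G
  set φ : {s // s ∈ S} → {t // t ∈ T} := fun s => ⟨f s, hfT s⟩ with hφ
  set ψ : {t // t ∈ T} → {s // s ∈ S} := fun t => ⟨g t, hgS t⟩ with hψ
  have key_inj : ∀ (s₁ s₂ : {s // s ∈ S}), f s₁ = f s₂ → s₁ = s₂ := by
    intro s₁ s₂ hf12
    apply Subtype.ext
    refine eq_of_scale hS s₁.2 s₂.2 (cf s₂ - cf s₁) fun j => ?_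
    have h1 : s₁.1 j = ((-(cf s₁) : ℝ) : MP) + f s₁ j := MP.shift_eq (hcf s₁ j)
    rw [hf12, hcf s₂ j, ← add_assoc, ← WithBot.coe_add] at h1
    rw [h1, show -cf s₁ + cf s₂ = cf s₂ - cf s₁ by ring]
  have key_inj' : ∀ (t₁ t₂ : {t // t ∈ T}), g t₁ = g t₂ → t₁ = t₂ := by
    intro t₁ t₂ hg12
    apply Subtype.ext
    refine eq_of_scale hT t₁.2 t₂.2 (cg t₂ - cg t₁) fun j => ?_
    have h1 : t₁.1 j = ((-(cg t₁) : ℝ) : MP) + g t₁ j := MP.shift_eq (hcg t₁ j)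
    rw [hg12, hcg t₂ j, ← add_assoc, ← WithBot.coe_add] at h1
    rw [h1, show -cg t₁ + cg t₂ = cg t₂ - cg t₁ by ring]
  have hinjφ : Function.Injective φ := by
    intro s₁ s₂ h
    exact key_inj s₁ s₂ (congrArg Subtype.val h)
  have hinjψ : Function.Injective ψ := by
    intro t₁ t₂ h
    exact key_inj' t₁ t₂ (congrArg Subtype.val h)
  have hcard : Fintype.card {s // s ∈ S} = Fintype.card {t // t ∈ T} :=
    le_antisymm (Fintype.card_le_of_injective φ hinjφ)
      (Fintype.card_le_of_injective ψ hinjψ)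
  exact ⟨φ, (Fintype.bijective_iff_injective_and_card φ).mpr ⟨hinjφ, hcard⟩,
    fun s => ⟨cf s, hcf s⟩⟩
end

section
/- In a max-plus cone K ⊆ (ℝ∪{-∞})ⁿ generated by a finite set S, every extremal of K is proportional to an element of S: if y ∈ K satisfies (y = u ⊕ v with u,v ∈ K implies y = u or y = v) and y is not the zero vector, then y = α ⊗ z for some z ∈ S and α ∈ ℝ. -/
open Finset

/-- Every non-zero extremal of a max-plus cone generated by a finite set `S` is a (real) scalar
multiple of an element of `S`. -/
theorem maxplus_extremal_proportional_to_generator {n : ℕ}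
    (S : Finset (Fin n → MP)) (y : Fin n → MP)
    (hyK : y ∈ genBy S) (hy0 : y ≠ fun _ => ⊥)
    (hext : ∀ u ∈ genBy S, ∀ v ∈ genBy S, y = (fun j => u j ⊔ v j) → y = u ∨ y = v) :
    ∃ z ∈ S, ∃ c : ℝ, ∀ j, y j = (c : MP) + z j := by
  classical
  obtain ⟨α₀, hα₀⟩ := hyK
  suffices h : ∀ S' : Finset (Fin n → MP), S' ⊆ S → ∀ α : (Fin n → MP) → MP,
      (∀ j, y j = S'.sup fun z => α z + z j) →
      ∃ z ∈ S, ∃ c : ℝ, ∀ j, y j = (c : MP) + z j from h S le_rfl α₀ hα₀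
  intro S'
  induction S' using Finset.strongInduction with
  | _ S' ih =>
    intro hsub α hα
    rcases S'.eq_empty_or_nonempty with rfl | ⟨z, hz⟩
    · exact absurd (funext fun j => by simpa using hα j) hy0
    · have hzS : z ∈ S := hsub hz
      have hsplit : y = fun j => (α z + z j) ⊔ (S'.erase z).sup (fun w => α w + w j) := by
        funext j
        rw [hα j]
        conv_lhs => rw [← Finset.insert_erase hz]
        rw [Finset.sup_insert]
      have hu : (fun j => α z + z j) ∈ genBy S := by
        refine ⟨fun w => if w = z then α z else ⊥, fun j => ?_⟩
        refine le_antisymm ?_ (Finset.sup_le fun w hw => ?_)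
        · have := Finset.le_sup (f := fun w => (if w = z then α z else ⊥) + w j) hzS
          simpa using this
        · by_cases hwz : w = z
          · subst hwz; simp
          · simp [hwz]
      have hv : (fun j => (S'.erase z).sup (fun w => α w + w j)) ∈ genBy S := by
        refine ⟨fun w => if w ∈ S'.erase z then α w else ⊥, fun j => ?_⟩
        refine le_antisymm (Finset.sup_le fun w hw => ?_)
          (Finset.sup_le fun w hw => ?_)
        · have := Finset.le_sup (f := fun w => (if w ∈ S'.erase z then α w else ⊥) + w j)
            (hsub (Finset.erase_subset _ _ hw))
          simpa [hw] using this
        · by_cases hw' : w ∈ S'.erase z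
          · simpa [hw'] using Finset.le_sup (f := fun w => α w + w j) hw'
          · simp [hw']
      rcases hext _ hu _ hv hsplit with hyu | hyv
      · have hj : ∀ j, y j = α z + z j := fun j => congrFun hyu j
        rcases hbot : α z with _ | c
        · exact absurd (funext fun j => by rw [hj j, hbot, WithBot.none_eq_bot]; simp) hy0
        · exact ⟨z, hzS, c, fun j => by rw [hj j, hbot]; rfl⟩
      · exact ih (S'.erase z) (Finset.erase_ssubset hz)
          ((Finset.erase_subset _ _).trans hsub) α (fun j => congrFun hyv j)
end

section
/- For the two-inequality system with k = l ∈ J₁ ∩ J₂: the set S^{kk} = {x : ⊕_{i∈I₁}(a_{1i}-b_{1k})⊗x_i ≤ x_k, ⊕_{i∈I₂}(a_{2i}-b_{2k})⊗x_i ≤ x_k} is generated by the vectors e_i for i ∉ I₁∪I₂, γ¹_{ki}⊗e_k ⊕ e_i for i ∈ I₁\I₂, γ²_{ki}⊗e_k ⊕ e_i for i ∈ I₂\I₁, and (γ¹_{ki} ⊕ γ²_{ki})⊗e_k ⊕ e_i for i ∈ I₁∩I₂, where γ¹_{ki} = a_{1i} - b_{1k} and γ²_{ki} = a_{2i} - b_{2k}.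 -/
open Finset

/-- Case `k = l ∈ J₁ ∩ J₂`: the set
`S^{kk} = {x : ⊕_{i∈I₁} γ¹_{ki}⊗x_i ≤ x_k, ⊕_{i∈I₂} γ²_{ki}⊗x_i ≤ x_k}` is generated by the
vectors `e_i` (`i ∉ I₁∪I₂`), `γ¹_{ki}⊗e_k ⊕ e_i` (`i ∈ I₁∖I₂`), `γ²_{ki}⊗e_k ⊕ e_i`
(`i ∈ I₂∖I₁`), and `(γ¹_{ki} ⊕ γ²_{ki})⊗e_k ⊕ e_i` (`i ∈ I₁∩I₂`), where
`γ¹_{ki} = a_{1i} - b_{1k}`, `γ²_{ki} = a_{2i} - b_{2k}`. -/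
theorem maxplus_Skk_generators {n : ℕ} (a1 a2 : Fin n → MP)
    (I1 I2 : Finset (Fin n)) (k : Fin n) (hk : k ∉ I1 ∪ I2) (b1k b2k : ℝ) :
    {x : Fin n → MP |
        (I1.sup fun i => (a1 i + ((-b1k : ℝ) : MP)) + x i) ≤ x k ∧
        (I2.sup fun i => (a2 i + ((-b2k : ℝ) : MP)) + x i) ≤ x k}
      = {x : Fin n → MP | ∃ α : Fin n → MP, ∀ j,
          x j = univ.sup fun i => α i +
            (if j = i then (0 : MP)
             else if j = k then
               (if i ∈ I1 then a1 i + ((-b1k : ℝ) : MP) else ⊥) ⊔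
               (if i ∈ I2 then a2 i + ((-b2k : ℝ) : MP) else ⊥)
             else ⊥)} := by
  ext x
  simp only [Set.mem_setOf_eq]
  constructor
  · rintro ⟨h1, h2⟩
    refine ⟨x, fun j => ?_⟩
    apply le_antisymm
    · have := Finset.le_sup (f := fun i => x i +
        (if j = i then (0 : MP)
         else if j = k then
           (if i ∈ I1 then a1 i + ((-b1k : ℝ) : MP) else ⊥) ⊔
           (if i ∈ I2 then a2 i + ((-b2k : ℝ) : MP) else ⊥)
         else ⊥)) (Finset.mem_univ j)
      simpa using this
    · apply Finset.sup_le
      intro i _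
      by_cases hji : j = i
      · simp [hji]
      · rw [if_neg hji]
        by_cases hjk : j = k
        · subst hjk
          have hA : x i + (if i ∈ I1 then a1 i + ((-b1k : ℝ) : MP) else ⊥) ≤ x j := by
            by_cases hi : i ∈ I1
            · rw [if_pos hi, add_comm]
              exact le_trans (Finset.le_sup (f := fun i => (a1 i + ((-b1k : ℝ) : MP)) + x i) hi) h1
            · simp [hi]
          have hB : x i + (if i ∈ I2 then a2 i + ((-b2k : ℝ) : MP) else ⊥) ≤ x j := by
            by_cases hi : i ∈ I2
            · rw [if_pos hi, add_comm]
              exact le_trans (Finset.le_sup (f := fun i => (a2 i + ((-b2k : ℝ) : MP)) + x i) hi) h2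
            · simp [hi]
          rw [if_pos rfl]
          rcases le_total (if i ∈ I1 then a1 i + ((-b1k : ℝ) : MP) else ⊥)
            (if i ∈ I2 then a2 i + ((-b2k : ℝ) : MP) else ⊥) with h | h
          · rw [sup_eq_right.2 h]; exact hB
          · rw [sup_eq_left.2 h]; exact hA
        · simp [hjk]
  · rintro ⟨α, hα⟩
    have hx : ∀ j, j ≠ k → x j = α j := by
      intro j hj
      rw [hα j]
      apply le_antisymm
      · apply Finset.sup_le
        intro i _
        by_cases hji : j = i
        · subst hji; simp
        · simp [hji, hj]
      · have := Finset.le_sup (f := fun i => α i +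
          (if j = i then (0 : MP)
           else if j = k then
             (if i ∈ I1 then a1 i + ((-b1k : ℝ) : MP) else ⊥) ⊔
             (if i ∈ I2 then a2 i + ((-b2k : ℝ) : MP) else ⊥)
           else ⊥)) (Finset.mem_univ j)
        simpa using this
    have hkx : ∀ i, i ≠ k → α i +
        ((if i ∈ I1 then a1 i + ((-b1k : ℝ) : MP) else ⊥) ⊔
         (if i ∈ I2 then a2 i + ((-b2k : ℝ) : MP) else ⊥)) ≤ x k := by
      intro i hik
      rw [hα k]
      have := Finset.le_sup (f := fun i => α i +
        (if k = i then (0 : MP)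
         else if k = k then
           (if i ∈ I1 then a1 i + ((-b1k : ℝ) : MP) else ⊥) ⊔
           (if i ∈ I2 then a2 i + ((-b2k : ℝ) : MP) else ⊥)
         else ⊥)) (Finset.mem_univ i)
      simpa only [if_neg (Ne.symm hik), if_true, eq_self_iff_true] using this
    constructor
    · apply Finset.sup_le
      intro i hi
      have hik : i ≠ k := by
        intro h; exact hk (h ▸ Finset.mem_union_left _ hi)
      calc (a1 i + ((-b1k : ℝ) : MP)) + x i = α i + (a1 i + ((-b1k : ℝ) : MP)) := by
            rw [hx i hik, add_comm]
        _ ≤ α i + ((if i ∈ I1 then a1 i + ((-b1k : ℝ) : MP) else ⊥) ⊔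
             (if i ∈ I2 then a2 i + ((-b2k : ℝ) : MP) else ⊥)) := by
            exact add_le_add_right (le_sup_of_le_left (le_of_eq (if_pos hi).symm)) _
        _ ≤ x k := hkx i hik
    · apply Finset.sup_le
      intro i hi
      have hik : i ≠ k := by
        intro h; exact hk (h ▸ Finset.mem_union_right _ hi)
      calc (a2 i + ((-b2k : ℝ) : MP)) + x i = α i + (a2 i + ((-b2k : ℝ) : MP)) := by
            rw [hx i hik, add_comm]
        _ ≤ α i + ((if i ∈ I1 then a1 i + ((-b1k : ℝ) : MP) else ⊥) ⊔
             (if i ∈ I2 then a2 i + ((-b2k : ℝ) : MP) else ⊥)) := by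
            exact add_le_add_right (le_sup_of_le_right (le_of_eq (if_pos hi).symm)) _
        _ ≤ x k := hkx i hik
end

section
/- For the two-inequality system with k ∈ J₁∩I₂ and l ∈ J₂∩I₁ (so both cross-coefficients γ¹_{kl} and γ²_{lk} are finite): if γ¹_{kl} + γ²_{lk} > 0, then S^{kl} = {x : ⊕_{i∈I₁}γ¹_{ki}⊗x_i ≤ x_k, ⊕_{i∈I₂}γ²_{li}⊗x_i ≤ x_l} consists exactly of the vectors x with x_i = -∞ for all i ∈ I₁ ∪ I₂ ∪ {k,l}; i.e., S^{kl} is generated by {e_i : i ∉ I₁∪I₂∪{k,l}}. -/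
open Finset

/-- Case `k ∈ J₁ ∩ I₂`, `l ∈ J₂ ∩ I₁` with positive cycle: if `γ¹_{kl} + γ²_{lk} > 0`, then
`S^{kl}` consists exactly of the vectors vanishing on `I₁ ∪ I₂ ∪ {k, l}` (so it is generated
by the unit vectors `e_i`, `i ∉ I₁ ∪ I₂ ∪ {k, l}`). -/
theorem maxplus_Skl_positive_cycle {n : ℕ} (a1 a2 : Fin n → MP)
    (I1 I2 : Finset (Fin n)) (k l : Fin n) (b1k b2l : ℝ)
    (hkI1 : k ∉ I1) (hlI2 : l ∉ I2) (hlI1 : l ∈ I1) (hkI2 : k ∈ I2)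
    (ha1 : ∀ i ∈ I1, a1 i ≠ ⊥) (ha2 : ∀ i ∈ I2, a2 i ≠ ⊥)
    (hcyc : 0 < (a1 l + ((-b1k : ℝ) : MP)) + (a2 k + ((-b2l : ℝ) : MP))) :
    {x : Fin n → MP |
        (I1.sup fun i => (a1 i + ((-b1k : ℝ) : MP)) + x i) ≤ x k ∧
        (I2.sup fun i => (a2 i + ((-b2l : ℝ) : MP)) + x i) ≤ x l}
      = {x : Fin n → MP | ∀ i, (i ∈ I1 ∨ i ∈ I2 ∨ i = k ∨ i = l) → x i = ⊥} := by
  ext x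
  simp only [Set.mem_setOf_eq]
  constructor
  · rintro ⟨h1, h2⟩
    have hkl : (a1 l + ((-b1k : ℝ) : MP)) + x l ≤ x k :=
      le_trans (Finset.le_sup (f := fun i => (a1 i + ((-b1k : ℝ) : MP)) + x i) hlI1) h1
    have hlk : (a2 k + ((-b2l : ℝ) : MP)) + x k ≤ x l :=
      le_trans (Finset.le_sup (f := fun i => (a2 i + ((-b2l : ℝ) : MP)) + x i) hkI2) h2
    set g : MP := (a1 l + ((-b1k : ℝ) : MP)) + (a2 k + ((-b2l : ℝ) : MP)) with hg
    have hsum : g + (x l + x k) ≤ x k + x l := by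
      calc g + (x l + x k)
          = ((a1 l + ((-b1k : ℝ) : MP)) + x l) + ((a2 k + ((-b2l : ℝ) : MP)) + x k) := by
            rw [hg]; exact add_add_add_comm _ _ _ _
        _ ≤ x k + x l := add_le_add hkl hlk
    have hbot : x l + x k = ⊥ := by
      by_contra hne
      obtain ⟨s, hs⟩ := WithBot.ne_bot_iff_exists.mp hne
      have hgne : g ≠ ⊥ := fun h => by simp [h] at hcyc
      obtain ⟨t, ht⟩ := WithBot.ne_bot_iff_exists.mp hgne
      rw [add_comm (x k) (x l)] at hsum
      rw [← hs, ← ht] at hsum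
      rw [← ht] at hcyc
      have h1' : t + s ≤ s := by exact_mod_cast hsum
      have h2' : (0 : ℝ) < t := by exact_mod_cast hcyc
      linarith
    have hor := WithBot.add_eq_bot.mp hbot
    have hg1 : a1 l + ((-b1k : ℝ) : MP) ≠ ⊥ := by
      simp [WithBot.add_eq_bot, ha1 l hlI1]
    have hg2 : a2 k + ((-b2l : ℝ) : MP) ≠ ⊥ := by
      simp [WithBot.add_eq_bot, ha2 k hkI2]
    have hklbot : x k = ⊥ ∧ x l = ⊥ := by
      rcases hor with h | h
      · have hxkb : x k = ⊥ := by
          rw [h] at hlk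
          exact ((WithBot.add_eq_bot.mp (le_bot_iff.mp hlk)).resolve_left hg2)
        exact ⟨hxkb, h⟩
      · have hxlb : x l = ⊥ := by
          rw [h] at hkl
          exact ((WithBot.add_eq_bot.mp (le_bot_iff.mp hkl)).resolve_left hg1)
        exact ⟨h, hxlb⟩
    intro i hi
    rcases hi with hi | hi | hi | hi
    · have hle : (a1 i + ((-b1k : ℝ) : MP)) + x i ≤ (⊥ : MP) := by
        calc (a1 i + ((-b1k : ℝ) : MP)) + x i
            ≤ I1.sup fun j => (a1 j + ((-b1k : ℝ) : MP)) + x j :=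
              Finset.le_sup (f := fun j => (a1 j + ((-b1k : ℝ) : MP)) + x j) hi
          _ ≤ x k := h1
          _ = ⊥ := hklbot.1
      have hne : a1 i + ((-b1k : ℝ) : MP) ≠ ⊥ := by
        simp [WithBot.add_eq_bot, ha1 i hi]
      exact (WithBot.add_eq_bot.mp (le_bot_iff.mp hle)).resolve_left hne
    · have hle : (a2 i + ((-b2l : ℝ) : MP)) + x i ≤ (⊥ : MP) := by
        calc (a2 i + ((-b2l : ℝ) : MP)) + x i
            ≤ I2.sup fun j => (a2 j + ((-b2l : ℝ) : MP)) + x j :=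
              Finset.le_sup (f := fun j => (a2 j + ((-b2l : ℝ) : MP)) + x j) hi
          _ ≤ x l := h2
          _ = ⊥ := hklbot.2
      have hne : a2 i + ((-b2l : ℝ) : MP) ≠ ⊥ := by
        simp [WithBot.add_eq_bot, ha2 i hi]
      exact (WithBot.add_eq_bot.mp (le_bot_iff.mp hle)).resolve_left hne
    · rw [hi]; exact hklbot.1
    · rw [hi]; exact hklbot.2
  · intro h
    constructor
    · refine Finset.sup_le fun i hi => ?_
      rw [h i (Or.inl hi), WithBot.add_bot]
      exact bot_le
    · refine Finset.sup_le fun i hi => ?_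
      rw [h i (Or.inr (Or.inl hi)), WithBot.add_bot]
      exact bot_le
end
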